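/- With the parallel bases μ·b∥ᵢ = δᵢ·a∥ᵢ (i = 1,2), the vectors c∥ᵢ = (μ/gcd(μ,δᵢ))·b∥ᵢ = (δᵢ/gcd(μ,δᵢ))·a∥ᵢ form a basis of the intersection lattice 𝒞 = 𝒜 ∩ ℬ. -/

import Mathlib

def latt (M : Matrix (Fin 2) (Fin 2) ℝ) : Set (Fin 2 → ℝ) :=
  {v | ∃ z : Fin 2 → ℤ, v = M.mulVec (fun i => (z i : ℝ))}

lemma cast_mulVec (W : Matrix (Fin 2) (Fin 2) ℤ) (z : Fin 2 → ℤ) :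
    (W.map (Int.cast : ℤ → ℝ)).mulVec (fun i => (z i : ℝ)) =
      fun i => ((W.mulVec z i : ℤ) : ℝ) := by
  funext j
  simp [Matrix.mulVec, dotProduct, Fin.sum_univ_two]

lemma latt_mul_subset (M : Matrix (Fin 2) (Fin 2) ℝ) (W : Matrix (Fin 2) (Fin 2) ℤ) :
    latt (M * W.map (Int.cast : ℤ → ℝ)) ⊆ latt M := by
  rintro v ⟨z, rfl⟩
  exact ⟨W.mulVec z, by rw [← Matrix.mulVec_mulVec, cast_mulVec]⟩

lemma mulVec_inj {M : Matrix (Fin 2) (Fin 2) ℝ} (hM : IsUnit M.det)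
    {a b : Fin 2 → ℝ} (h : M.mulVec a = M.mulVec b) : a = b := by
  have := congrArg (M⁻¹.mulVec) h
  rw [Matrix.mulVec_mulVec, Matrix.mulVec_mulVec, Matrix.nonsing_inv_mul M hM,
    Matrix.one_mulVec, Matrix.one_mulVec] at this
  exact this

lemma castdet (W : Matrix (Fin 2) (Fin 2) ℤ) :
    (W.map (Int.cast : ℤ → ℝ)).det = (W.det : ℝ) := by
  exact ((Int.castRingHom ℝ).map_det W).symm

lemma map_mul_cast (M N : Matrix (Fin 2) (Fin 2) ℤ) :
    (M * N).map (Int.cast : ℤ → ℝ) =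
      M.map (Int.cast : ℤ → ℝ) * N.map (Int.cast : ℤ → ℝ) := by
  rw [show (Int.cast : ℤ → ℝ) = ⇑(Int.castRingHom ℝ) from rfl, Matrix.map_mul]

theorem snf_csl_basis
    (A B : Matrix (Fin 2) (Fin 2) ℝ) (hA : IsUnit A.det) (hB : IsUnit B.det)
    (μ : ℤ) (hμ : 0 < μ) (P : Matrix (Fin 2) (Fin 2) ℤ)
    (hcop : Int.gcd μ (Int.gcd (Int.gcd (P 0 0) (P 0 1)) (Int.gcd (P 1 0) (P 1 1))) = 1)
    (hT : A⁻¹ * B = ((μ : ℝ))⁻¹ • (P.map (Int.cast : ℤ → ℝ)))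
    (U V : Matrix (Fin 2) (Fin 2) ℤ) (hU : IsUnit U.det) (hV : IsUnit V.det)
    (d : Fin 2 → ℤ) (hd : d 0 ∣ d 1)
    (hSNF : P = U * Matrix.diagonal d * V⁻¹)
    (Apar Bpar : Matrix (Fin 2) (Fin 2) ℝ)
    (hApar : Apar = A * U.map (Int.cast : ℤ → ℝ))
    (hBpar : Bpar = B * V.map (Int.cast : ℤ → ℝ))
    (hpar : ∀ i j : Fin 2, (μ : ℝ) * Bpar j i = (d i : ℝ) * Apar j i)
    (Cpar : Matrix (Fin 2) (Fin 2) ℝ)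
    (hCpar : ∀ i j : Fin 2,
      Cpar j i = ((μ / Int.gcd μ (d i) : ℤ) : ℝ) * Bpar j i ∧
      Cpar j i = ((d i / Int.gcd μ (d i) : ℤ) : ℝ) * Apar j i) :
    latt Cpar = latt A ∩ latt B := by
  have hμne : (μ : ℝ) ≠ 0 := Int.cast_ne_zero.mpr hμ.ne'
  have hAparU : IsUnit Apar.det := by
    rw [hApar, Matrix.det_mul, castdet]
    exact hA.mul (hU.map (Int.castRingHom ℝ))
  have hBparU : IsUnit Bpar.det := by
    rw [hBpar, Matrix.det_mul, castdet]
    exact hB.mul (hV.map (Int.castRingHom ℝ))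
  have hdne : ∀ i, d i ≠ 0 := by
    intro i hdi
    have hcol : ∀ j, Bpar j i = 0 := by
      intro j
      have h := hpar i j
      rw [hdi] at h
      simpa [hμne] using h
    exact hBparU.ne_zero (Matrix.det_eq_zero_of_column_eq_zero i hcol)
  have hgpos : ∀ i, 0 < Int.gcd μ (d i) := fun i => Int.gcd_pos_iff.mpr (Or.inl hμ.ne')
  have hgne : ∀ i, (Int.gcd μ (d i) : ℤ) ≠ 0 := fun i => Int.natCast_ne_zero.mpr (hgpos i).ne'
  set e : Fin 2 → ℤ := fun i => d i / (Int.gcd μ (d i) : ℤ) with he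
  set m : Fin 2 → ℤ := fun i => μ / (Int.gcd μ (d i) : ℤ) with hm
  -- Cpar in terms of Apar and Bpar via integer diagonal matrices
  have hCe : Cpar = Apar * (Matrix.diagonal e).map (Int.cast : ℤ → ℝ) := by
    ext j i
    rw [(hCpar i j).2]
    fin_cases i <;>
      simp [Matrix.mul_apply, Fin.sum_univ_two, Matrix.diagonal, he, mul_comm]
  have hCm : Cpar = Bpar * (Matrix.diagonal m).map (Int.cast : ℤ → ℝ) := by
    ext j i
    rw [(hCpar i j).1]
    fin_cases i <;>
      simp [Matrix.mul_apply, Fin.sum_univ_two, Matrix.diagonal, hm, mul_comm]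
  have hAeq : A = Apar * (U⁻¹).map (Int.cast : ℤ → ℝ) := by
    rw [hApar, Matrix.mul_assoc, ← map_mul_cast, Matrix.mul_nonsing_inv U hU,
      Matrix.map_one _ Int.cast_zero Int.cast_one, Matrix.mul_one]
  have hBeq : B = Bpar * (V⁻¹).map (Int.cast : ℤ → ℝ) := by
    rw [hBpar, Matrix.mul_assoc, ← map_mul_cast, Matrix.mul_nonsing_inv V hV,
      Matrix.map_one _ Int.cast_zero Int.cast_one, Matrix.mul_one]
  apply Set.eq_of_subset_of_subset
  · intro v hv
    constructor
    · have hCA : Cpar = A * (U * Matrix.diagonal e).map (Int.cast : ℤ → ℝ) := by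
        rw [map_mul_cast, ← Matrix.mul_assoc, ← hApar, ← hCe]
      exact latt_mul_subset A _ (hCA ▸ hv)
    · have hCB : Cpar = B * (V * Matrix.diagonal m).map (Int.cast : ℤ → ℝ) := by
        rw [map_mul_cast, ← Matrix.mul_assoc, ← hBpar, ← hCm]
      exact latt_mul_subset B _ (hCB ▸ hv)
  · rintro v ⟨hvA, hvB⟩
    obtain ⟨x, hx⟩ := (hAeq ▸ latt_mul_subset Apar U⁻¹ : latt A ⊆ latt Apar) hvA
    obtain ⟨y, hy⟩ := (hBeq ▸ latt_mul_subset Bpar V⁻¹ : latt B ⊆ latt Bpar) hvB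
    have hxy : ∀ i, μ * x i = d i * y i := by
      have h1 : Apar.mulVec (fun i => ((μ * x i : ℤ) : ℝ)) =
          Apar.mulVec (fun i => ((d i * y i : ℤ) : ℝ)) := by
        funext j
        have hvj : Apar j 0 * (x 0 : ℝ) + Apar j 1 * (x 1 : ℝ)
            = Bpar j 0 * (y 0 : ℝ) + Bpar j 1 * (y 1 : ℝ) := by
          have h2 := congrFun hx j
          have h3 := congrFun hy j
          simp only [Matrix.mulVec, dotProduct, Fin.sum_univ_two] at h2 h3
          rw [← h2, ← h3]
        simp only [Matrix.mulVec, dotProduct, Fin.sum_univ_two]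
        push_cast
        linear_combination (μ : ℝ) * hvj + (y 0 : ℝ) * (hpar 0 j) + (y 1 : ℝ) * (hpar 1 j)
      intro i
      have h4 := congrFun (mulVec_inj hAparU h1) i
      exact_mod_cast h4
    have hmx : ∀ i, m i * x i = e i * y i := by
      intro i
      have h5 : (Int.gcd μ (d i) : ℤ) * (m i * x i) = (Int.gcd μ (d i) : ℤ) * (e i * y i) := by
        rw [← mul_assoc, ← mul_assoc, Int.mul_ediv_cancel' (Int.gcd_dvd_left _ _),
          Int.mul_ediv_cancel' (Int.gcd_dvd_right _ _)]
        exact hxy i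
      exact mul_left_cancel₀ (hgne i) h5
    have hedvd : ∀ i, e i ∣ x i := by
      intro i
      have hcop2 : IsCoprime (e i) (m i) :=
        (Int.isCoprime_iff_gcd_eq_one.mpr (Int.gcd_div_gcd_div_gcd (hgpos i))).symm
      exact hcop2.dvd_of_dvd_mul_left ⟨y i, hmx i⟩
    refine ⟨fun i => x i / e i, ?_⟩
    have hdiv : ∀ i, ((e i : ℤ) : ℝ) * ((x i / e i : ℤ) : ℝ) = (x i : ℝ) := by
      intro i
      rw [← Int.cast_mul, Int.mul_ediv_cancel' (hedvd i)]
    funext j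
    rw [hx]
    simp only [Matrix.mulVec, dotProduct, Fin.sum_univ_two,
      (hCpar 0 j).2, (hCpar 1 j).2]
    simp only [he] at hdiv ⊢
    linear_combination (-(Apar j 0)) * hdiv 0 - Apar j 1 * hdiv 1
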